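/- (Theorem 2 of the paper.) Suppose that every choice of Q columns from among the first M(Q+1) columns of A is linearly independent (equivalently, every Q×Q submatrix formed by choosing Q of these columns is invertible). Then for Lebesgue-almost every X₀ ∈ ℂ^{M×MQ}, letting X have first MQ columns equal to X₀ and satisfy the training condition x_m(MQ+n) = δ_{n−m} (1 ≤ n, m ≤ M), the matrix C_R(X) is invertible and det(J(X)) ≠ 0. -/

import Mathlib

open Matrix

noncomputable section

/-- The column index `(m-1)Q + q` (0-indexed: `m*Q + q`) among the first `MQ`
columns, as an index into `Fin T`. -/
def emb (M Q T : ℕ) (h : M * Q ≤ T) (p : Fin M × Fin Q) : Fin T :=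
  ⟨p.1.1 * Q + p.2.1, by
    have hm := p.1.2
    have hq := p.2.2
    have h1 : p.1.1 * Q + p.2.1 < (p.1.1 + 1) * Q := by
      have : (p.1.1 + 1) * Q = p.1.1 * Q + Q := by ring
      omega
    have h2 : (p.1.1 + 1) * Q ≤ M * Q := Nat.mul_le_mul_right Q hm
    omega⟩

/-- The column index `MQ + j` (0-indexed) as an index into `Fin T`, assuming
`M(Q+1) ≤ T`. -/
def tcol (M Q T : ℕ) (h : M * (Q + 1) ≤ T) (j : Fin M) : Fin T :=
  ⟨M * Q + j.1, by
    have hj := j.2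
    have : M * (Q + 1) = M * Q + M := by ring
    omega⟩

/-- `R(X) ∈ ℂ^{MQ×T}`: the block matrix whose `m`-th block of `Q` rows is
`A·diag(x_m)`; rows are indexed by pairs `(m, q)`. -/
def Rmat (M Q T : ℕ) (A : Matrix (Fin Q) (Fin T) ℂ) (X : Matrix (Fin M) (Fin T) ℂ) :
    Matrix (Fin M × Fin Q) (Fin T) ℂ :=
  Matrix.of fun p t => A p.2 t * X p.1 t

/-- `C_R(X) ∈ ℂ^{MQ×MQ}`: the submatrix of the first `MQ` columns of `R(X)`. -/
def CR (M Q T : ℕ) (h : M * Q ≤ T) (A : Matrix (Fin Q) (Fin T) ℂ)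
    (X : Matrix (Fin M) (Fin T) ℂ) : Matrix (Fin M × Fin Q) (Fin M × Fin Q) ℂ :=
  Matrix.of fun p p' => Rmat M Q T A X p (emb M Q T h p')

/-- `B = C_R⁻¹·R ∈ ℂ^{MQ×T}`, the reduced row echelon form representative. -/
def Bmat (M Q T : ℕ) (h : M * Q ≤ T) (A : Matrix (Fin Q) (Fin T) ℂ)
    (X : Matrix (Fin M) (Fin T) ℂ) : Matrix (Fin M × Fin Q) (Fin T) ℂ :=
  (CR M Q T h A X)⁻¹ * Rmat M Q T A X

/-- `J(X) ∈ ℂ^{MQ×MQ}`: the block matrix whose `j`-th block of `Q` rows is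
`A[:,1:MQ]·diag(B(MQ+j))`. -/
def Jmat (M Q T : ℕ) (h : M * (Q + 1) ≤ T) (A : Matrix (Fin Q) (Fin T) ℂ)
    (X : Matrix (Fin M) (Fin T) ℂ) : Matrix (Fin M × Fin Q) (Fin M × Fin Q) ℂ :=
  Matrix.of fun p p' =>
    A p.2 (emb M Q T (le_trans (Nat.mul_le_mul_left M (Nat.le_succ Q)) h) p')
      * Bmat M Q T (le_trans (Nat.mul_le_mul_left M (Nat.le_succ Q)) h) A X p'
          (tcol M Q T h p.1)



namespace S14aux
open MeasureTheory MvPolynomial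

lemma L1 (n : ℕ) (P : MvPolynomial (Fin n) ℂ) (hP : P ≠ 0) :
    volume {x : Fin n → ℂ | MvPolynomial.eval x P = 0} = 0 := by
  induction n with
  | zero =>
    obtain ⟨c, rfl⟩ := MvPolynomial.C_surjective (Fin 0) P
    have hc : c ≠ 0 := fun h => hP (by rw [h, map_zero])
    have : {x : Fin 0 → ℂ | MvPolynomial.eval x (C c) = 0} = ∅ := by
      ext x; simp [hc]
    rw [this]; simp
  | succ n ih =>
    set p : Polynomial (MvPolynomial (Fin n) ℂ) := MvPolynomial.finSuccEquiv ℂ n P with hp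
    have hpne : p ≠ 0 := fun h => hP ((map_eq_zero_iff _ (AlgEquiv.injective _)).mp h)
    have hlead : p.coeff p.natDegree ≠ 0 := Polynomial.leadingCoeff_ne_zero.mpr hpne
    have hZmeas : MeasurableSet {x : Fin (n+1) → ℂ | MvPolynomial.eval x P = 0} :=
      (MvPolynomial.continuous_eval P).measurable (measurableSet_singleton 0)
    set e := MeasurableEquiv.piFinSuccAbove (fun _ : Fin (n+1) => ℂ) 0 with he
    have mp : MeasurePreserving e volume volume :=
      volume_preserving_piFinSuccAbove (fun _ : Fin (n+1) => ℂ) 0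
    have mps : MeasurePreserving e.symm volume volume := mp.symm e
    have hsymm : ∀ (x : ℂ) (y : Fin n → ℂ), e.symm (x, y) = Fin.cons x y := by
      intro x y
      show (Fin.insertNthEquiv (fun _ : Fin (n+1) => ℂ) 0) (x, y) = Fin.cons x y
      simp [Fin.insertNthEquiv, Fin.insertNth_zero']
    have key : volume {x : Fin (n+1) → ℂ | MvPolynomial.eval x P = 0}
        = ((volume : Measure ℂ).prod (volume : Measure (Fin n → ℂ)))
          {w : ℂ × (Fin n → ℂ) | MvPolynomial.eval (Fin.cons w.1 w.2) P = 0} := by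
      rw [← mps.measure_preimage_equiv]
      congr 1
      ext w
      simp only [Set.mem_preimage, Set.mem_setOf_eq]
      rw [hsymm w.1 w.2]
    rw [key]
    -- swap
    have hS'meas : MeasurableSet {w : ℂ × (Fin n → ℂ) | MvPolynomial.eval (Fin.cons w.1 w.2) P = 0} := by
      have hc : Continuous fun w : ℂ × (Fin n → ℂ) => (Fin.cons w.1 w.2 : Fin (n+1) → ℂ) := by
        apply continuous_pi
        intro i
        refine Fin.cases ?_ ?_ i
        · simpa using continuous_fst
        · intro j; simpa [Function.comp_def] using (continuous_apply j).comp continuous_snd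
      exact ((MvPolynomial.continuous_eval P).comp hc).measurable (measurableSet_singleton 0)
    have hswap : ((volume : Measure ℂ).prod (volume : Measure (Fin n → ℂ)))
          {w : ℂ × (Fin n → ℂ) | MvPolynomial.eval (Fin.cons w.1 w.2) P = 0}
        = ((volume : Measure (Fin n → ℂ)).prod (volume : Measure ℂ))
          {w : (Fin n → ℂ) × ℂ | MvPolynomial.eval (Fin.cons w.2 w.1) P = 0} := by
      rw [← Measure.prod_swap, Measure.map_apply measurable_swap hS'meas]
      rfl
    rw [hswap]
    have hmeas2 : MeasurableSet {w : (Fin n → ℂ) × ℂ | MvPolynomial.eval (Fin.cons w.2 w.1) P = 0} := by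
      have hc2 : Continuous fun w : (Fin n → ℂ) × ℂ => (Fin.cons w.2 w.1 : Fin (n+1) → ℂ) := by
        apply continuous_pi
        intro i
        refine Fin.cases ?_ ?_ i
        · simpa using continuous_snd
        · intro j; simpa [Function.comp_def] using (continuous_apply j).comp continuous_fst
      exact ((MvPolynomial.continuous_eval P).comp hc2).measurable (measurableSet_singleton 0)
    rw [MeasureTheory.Measure.measure_prod_null hmeas2]
    · -- a.e. y, slice has measure zero
      have hae : ∀ᵐ y : Fin n → ℂ ∂volume, MvPolynomial.eval y (p.coeff p.natDegree) ≠ 0 := by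
        rw [ae_iff]
        convert ih (p.coeff p.natDegree) hlead using 2
        ext y; simp
      filter_upwards [hae] with y hy
      have hpyne : p.map (MvPolynomial.eval y) ≠ 0 := by
        intro h
        apply hy
        have := Polynomial.coeff_map (MvPolynomial.eval y) p.natDegree (p := p)
        rw [h] at this
        simpa using this.symm
      have hfin : {x : ℂ | Polynomial.eval x (p.map (MvPolynomial.eval y)) = 0}.Finite :=
        Polynomial.finite_setOf_isRoot hpyne
      have : (Prod.mk y ⁻¹' {w : (Fin n → ℂ) × ℂ | MvPolynomial.eval (Fin.cons w.2 w.1) P = 0})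
          = {x : ℂ | Polynomial.eval x (p.map (MvPolynomial.eval y)) = 0} := by
        ext x
        simp only [Set.mem_preimage, Set.mem_setOf_eq]
        rw [MvPolynomial.eval_eq_eval_mv_eval']
      rw [Pi.zero_apply, this]
      exact hfin.measure_zero _



lemma L2 (σ : Type*) [Fintype σ] (P : MvPolynomial σ ℂ) (hP : P ≠ 0) :
    volume {x : σ → ℂ | MvPolynomial.eval x P = 0} = 0 := by
  set e : Fin (Fintype.card σ) ≃ σ := (Fintype.equivFin σ).symm with he
  have mp : MeasurePreserving (MeasurableEquiv.piCongrLeft (fun _ : σ => ℂ) e) volume volume :=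
    volume_measurePreserving_piCongrLeft (fun _ : σ => ℂ) e
  rw [← mp.measure_preimage_equiv]
  have hpre : (MeasurableEquiv.piCongrLeft (fun _ : σ => ℂ) e) ⁻¹' {x : σ → ℂ | MvPolynomial.eval x P = 0}
      = {u : Fin (Fintype.card σ) → ℂ | MvPolynomial.eval u (rename e.symm P) = 0} := by
    ext u
    simp only [Set.mem_preimage, Set.mem_setOf_eq, MvPolynomial.eval_rename]
    have : ⇑(MeasurableEquiv.piCongrLeft (fun _ : σ => ℂ) e) u = u ∘ e.symm := by
      funext s
      show (Equiv.piCongrLeft (fun _ : σ => ℂ) e) u s = u (e.symm s)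
      conv_lhs => rw [show s = e (e.symm s) by simp]
      rw [Equiv.piCongrLeft_apply_apply]
    rw [this]
  rw [hpre]
  apply L1
  intro h
  exact hP ((MvPolynomial.rename_injective _ e.symm.injective).eq_iff.mp (by simpa using h))

lemma mpu (ι κ : Type*) [Fintype ι] [Fintype κ] :
    MeasurePreserving (fun (x : ι → κ → ℂ) (v : ι × κ) => x v.1 v.2) volume volume := by
  constructor
  · exact measurable_pi_lambda _ fun v => (measurable_pi_apply v.2).comp (measurable_pi_apply v.1)
  · have key : Measure.map (fun (x : ι → κ → ℂ) (v : ι × κ) => x v.1 v.2) volume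
        = Measure.pi (fun _ : ι × κ => (volume : Measure ℂ)) := by
      refine (Measure.pi_eq (μ' := Measure.map (fun (x : ι → κ → ℂ) (v : ι × κ) => x v.1 v.2) volume) (μ := fun _ : ι × κ => (volume : Measure ℂ)) fun s hs => ?_).symm
      rw [Measure.map_apply
        (measurable_pi_lambda _ fun v => (measurable_pi_apply v.2).comp (measurable_pi_apply v.1))
        (MeasurableSet.univ_pi hs)]
      have hpre : (fun (x : ι → κ → ℂ) (v : ι × κ) => x v.1 v.2) ⁻¹' Set.univ.pi s
          = Set.univ.pi (fun i => Set.univ.pi fun k => s (i, k)) := by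
        ext x
        simp [Set.mem_pi, Prod.forall]
      rw [hpre, volume_pi, Measure.pi_pi]
      simp_rw [volume_pi, Measure.pi_pi]
      exact (Fintype.prod_prod_type fun v : ι × κ => volume (s v)).symm ▸ rfl
    exact key.trans volume_pi.symm

lemma L3 (ι κ : Type*) [Fintype ι] [Fintype κ] (P : MvPolynomial (ι × κ) ℂ) (hP : P ≠ 0) :
    ∀ᵐ X₀ : ι → κ → ℂ ∂volume, MvPolynomial.eval (fun v => X₀ v.1 v.2) P ≠ 0 := by
  have hZ : MeasurableSet {x : ι × κ → ℂ | MvPolynomial.eval x P = 0} :=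
    (MvPolynomial.continuous_eval P).measurable (measurableSet_singleton 0)
  rw [ae_iff]
  have : {X₀ : ι → κ → ℂ | ¬ MvPolynomial.eval (fun v => X₀ v.1 v.2) P ≠ 0}
      = (fun (x : ι → κ → ℂ) (v : ι × κ) => x v.1 v.2) ⁻¹' {x : ι × κ → ℂ | MvPolynomial.eval x P = 0} := by
    ext x; simp [not_not]
  rw [this, (mpu ι κ).measure_preimage hZ.nullMeasurableSet]
  exact L2 _ P hP

end S14aux

namespace S14outer
namespace S14

variable (M Q T : ℕ)

/-- complex version -/
def CRX (h1 : M * Q ≤ T) (A : Matrix (Fin Q) (Fin T) ℂ) (X₀ : Fin M → (Fin M × Fin Q) → ℂ) :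
    Matrix (Fin M × Fin Q) (Fin M × Fin Q) ℂ :=
  Matrix.of fun p p' => A p.2 (emb M Q T h1 p') * X₀ p.1 p'

def RtX (h2 : M * (Q + 1) ≤ T) (A : Matrix (Fin Q) (Fin T) ℂ) :
    Matrix (Fin M × Fin Q) (Fin M) ℂ :=
  Matrix.of fun p j => if j = p.1 then A p.2 (tcol M Q T h2 j) else 0

def JX (h1 : M * Q ≤ T) (h2 : M * (Q + 1) ≤ T) (A : Matrix (Fin Q) (Fin T) ℂ)
    (X₀ : Fin M → (Fin M × Fin Q) → ℂ) : Matrix (Fin M × Fin Q) (Fin M × Fin Q) ℂ :=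
  Matrix.of fun p p' =>
    A p.2 (emb M Q T h1 p') * ((CRX M Q T h1 A X₀).adjugate * RtX M Q T h2 A) p' p.1

def FX (h1 : M * Q ≤ T) (h2 : M * (Q + 1) ≤ T) (A : Matrix (Fin Q) (Fin T) ℂ)
    (X₀ : Fin M → (Fin M × Fin Q) → ℂ) : ℂ :=
  (CRX M Q T h1 A X₀).det * (JX M Q T h1 h2 A X₀).det

/-- polynomial versions; variables indexed by `Fin M × (Fin M × Fin Q)` -/
abbrev S14R := MvPolynomial (Fin M × (Fin M × Fin Q)) ℂ

def CRP (h1 : M * Q ≤ T) (A : Matrix (Fin Q) (Fin T) ℂ) :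
    Matrix (Fin M × Fin Q) (Fin M × Fin Q) (S14R M Q) :=
  Matrix.of fun p p' => MvPolynomial.C (A p.2 (emb M Q T h1 p')) * MvPolynomial.X (p.1, p')

def RtP (h2 : M * (Q + 1) ≤ T) (A : Matrix (Fin Q) (Fin T) ℂ) :
    Matrix (Fin M × Fin Q) (Fin M) (S14R M Q) :=
  (RtX M Q T h2 A).map MvPolynomial.C

def JP (h1 : M * Q ≤ T) (h2 : M * (Q + 1) ≤ T) (A : Matrix (Fin Q) (Fin T) ℂ) :
    Matrix (Fin M × Fin Q) (Fin M × Fin Q) (S14R M Q) :=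
  Matrix.of fun p p' =>
    MvPolynomial.C (A p.2 (emb M Q T h1 p')) *
      ((CRP M Q T h1 A).adjugate * RtP M Q T h2 A) p' p.1

def FP (h1 : M * Q ≤ T) (h2 : M * (Q + 1) ≤ T) (A : Matrix (Fin Q) (Fin T) ℂ) : S14R M Q :=
  (CRP M Q T h1 A).det * (JP M Q T h1 h2 A).det

variable {M Q T}

lemma map_CRP (h1 : M * Q ≤ T) (A : Matrix (Fin Q) (Fin T) ℂ)
    (x : Fin M × (Fin M × Fin Q) → ℂ) :
    (CRP M Q T h1 A).map (MvPolynomial.eval x) = CRX M Q T h1 A (fun m p' => x (m, p')) := by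
  ext p p'
  simp [CRP, CRX, Matrix.map_apply]

lemma map_RtP (h2 : M * (Q + 1) ≤ T) (A : Matrix (Fin Q) (Fin T) ℂ)
    (x : Fin M × (Fin M × Fin Q) → ℂ) :
    (RtP M Q T h2 A).map (MvPolynomial.eval x) = RtX M Q T h2 A := by
  ext p j
  simp [RtP, Matrix.map_apply]

lemma map_JP (h1 : M * Q ≤ T) (h2 : M * (Q + 1) ≤ T) (A : Matrix (Fin Q) (Fin T) ℂ)
    (x : Fin M × (Fin M × Fin Q) → ℂ) :
    (JP M Q T h1 h2 A).map (MvPolynomial.eval x)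
      = JX M Q T h1 h2 A (fun m p' => x (m, p')) := by
  have hmul : ((CRP M Q T h1 A).adjugate * RtP M Q T h2 A).map (MvPolynomial.eval x)
      = (CRX M Q T h1 A (fun m p' => x (m, p'))).adjugate * RtX M Q T h2 A := by
    rw [Matrix.map_mul]
    have hadj : (CRP M Q T h1 A).adjugate.map (MvPolynomial.eval x)
        = ((CRP M Q T h1 A).map (MvPolynomial.eval x)).adjugate :=
      RingHom.map_adjugate (MvPolynomial.eval x) (CRP M Q T h1 A)
    rw [hadj, map_CRP, map_RtP]
  ext p p'
  have h3 : (((CRP M Q T h1 A).adjugate * RtP M Q T h2 A).map (MvPolynomial.eval x)) p' p.1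
      = ((CRX M Q T h1 A (fun m p' => x (m, p'))).adjugate * RtX M Q T h2 A) p' p.1 := by
    rw [hmul]
  simp only [JP, JX, Matrix.map_apply, Matrix.of_apply, _root_.map_mul, MvPolynomial.eval_C]
  congr 1

lemma eval_FP (h1 : M * Q ≤ T) (h2 : M * (Q + 1) ≤ T) (A : Matrix (Fin Q) (Fin T) ℂ)
    (x : Fin M × (Fin M × Fin Q) → ℂ) :
    MvPolynomial.eval x (FP M Q T h1 h2 A) = FX M Q T h1 h2 A (fun m p' => x (m, p')) := by
  rw [FP, _root_.map_mul]
  rw [show (MvPolynomial.eval x) (CRP M Q T h1 A).det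
      = ((CRP M Q T h1 A).map (MvPolynomial.eval x)).det from
    RingHom.map_det (MvPolynomial.eval x) (CRP M Q T h1 A)]
  rw [show (MvPolynomial.eval x) (JP M Q T h1 h2 A).det
      = ((JP M Q T h1 h2 A).map (MvPolynomial.eval x)).det from
    RingHom.map_det (MvPolynomial.eval x) (JP M Q T h1 h2 A)]
  rw [map_CRP, map_JP]
  rfl

end S14

namespace S14
variable {M Q T : ℕ}

def blk (h1 : M * Q ≤ T) (A : Matrix (Fin Q) (Fin T) ℂ) (m : Fin M) :
    Matrix (Fin Q) (Fin Q) ℂ :=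
  Matrix.of fun q q' => A q (emb M Q T h1 (m, q'))

def Xstar (M Q : ℕ) : Fin M → (Fin M × Fin Q) → ℂ := fun m p' => if p'.1 = m then 1 else 0

section star
variable (h1 : M * Q ≤ T) (h2 : M * (Q + 1) ≤ T) (A : Matrix (Fin Q) (Fin T) ℂ)
  (hA : ∀ f : Fin Q → Fin (M * (Q + 1)), Function.Injective f →
      IsUnit (Matrix.of fun q q' : Fin Q => A q (Fin.castLE h2 (f q'))))

include hA

lemma blk_isUnit (m : Fin M) : IsUnit (blk h1 A m) := by
  have hb : ∀ q' : Fin Q, m.1 * Q + q'.1 < M * (Q + 1) := by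
    intro q'
    have e1 : (m.1 + 1) * Q = m.1 * Q + Q := Nat.succ_mul _ _
    have e2 : (m.1 + 1) * Q ≤ M * Q := Nat.mul_le_mul_right Q m.2
    have e3 : M * (Q + 1) = M * Q + M := Nat.mul_succ M Q
    have := q'.2
    omega
  have := hA (fun q' => ⟨m.1 * Q + q'.1, hb q'⟩) (by
    intro a b hab
    have : m.1 * Q + a.1 = m.1 * Q + b.1 := congrArg Fin.val hab
    exact Fin.ext (by omega))
  exact this

lemma blk_det_ne (m : Fin M) : (blk h1 A m).det ≠ 0 :=
  ((Matrix.isUnit_iff_isUnit_det _).mp (blk_isUnit h1 h2 A hA m)).ne_zero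

def bvec (j : Fin M) : Fin Q → ℂ :=
  (blk h1 A j)⁻¹ *ᵥ fun q => A q (tcol M Q T h2 j)

lemma blk_mulVec_bvec (j : Fin M) :
    blk h1 A j *ᵥ bvec h1 h2 A j = fun q => A q (tcol M Q T h2 j) := by
  rw [bvec, Matrix.mulVec_mulVec,
    Matrix.mul_nonsing_inv _ ((Matrix.isUnit_iff_isUnit_det _).mp (blk_isUnit h1 h2 A hA j)),
    Matrix.one_mulVec]

lemma bvec_ne (j : Fin M) (q0 : Fin Q) : bvec h1 h2 A j q0 ≠ 0 := by
  intro hb0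
  have e1 : (j.1 + 1) * Q = j.1 * Q + Q := Nat.succ_mul _ _
  have e2 : (j.1 + 1) * Q ≤ M * Q := Nat.mul_le_mul_right Q j.2
  have e3 : M * (Q + 1) = M * Q + M := Nat.mul_succ M Q
  have hj2 := j.2
  set f : Fin Q → Fin (M * (Q + 1)) := fun q' =>
    if q' = q0 then ⟨M * Q + j.1, by omega⟩
    else ⟨j.1 * Q + q'.1, by have := q'.2; omega⟩ with hf
  have finj : Function.Injective f := by
    intro a b hab
    by_cases ha : a = q0 <;> by_cases hb : b = q0
    · rw [ha, hb]
    · exfalso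
      have hv : M * Q + j.1 = j.1 * Q + b.1 := by
        have := congrArg Fin.val hab
        simpa [hf, ha, hb] using this
      have := b.2
      omega
    · exfalso
      have hv : j.1 * Q + a.1 = M * Q + j.1 := by
        have := congrArg Fin.val hab
        simpa [hf, ha, hb] using this
      have := a.2
      omega
    · have hv : j.1 * Q + a.1 = j.1 * Q + b.1 := by
        have := congrArg Fin.val hab
        simpa [hf, ha, hb] using this
      exact Fin.ext (by omega)
  have hN := hA f finj
  set N : Matrix (Fin Q) (Fin Q) ℂ :=
    Matrix.of fun q q' : Fin Q => A q (Fin.castLE h2 (f q')) with hNdef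
  set w : Fin Q → ℂ := fun q' => if q' = q0 then (-1 : ℂ) else bvec h1 h2 A j q' with hw
  have hNw : N *ᵥ w = 0 := by
    funext q
    show ∑ q', N q q' * w q' = 0
    have hterm : ∀ q' : Fin Q, N q q' * w q'
        = blk h1 A j q q' * bvec h1 h2 A j q'
          - (if q' = q0 then A q (tcol M Q T h2 j) else 0) := by
      intro q'
      by_cases hq : q' = q0
      · subst hq
        have hcast : Fin.castLE h2 (f q') = tcol M Q T h2 j := by
          apply Fin.ext
          simp [hf, tcol]
        simp only [hw, if_pos rfl, hNdef, Matrix.of_apply, hcast, hb0, mul_zero]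
        simp
      · have hcast : Fin.castLE h2 (f q') = emb M Q T h1 (j, q') := by
          apply Fin.ext
          simp [hf, hq, emb]
        simp only [hw, if_neg hq, hNdef, Matrix.of_apply, hcast, blk]
        simp
    rw [Finset.sum_congr rfl fun q' _ => hterm q', Finset.sum_sub_distrib]
    rw [Finset.sum_ite_eq' Finset.univ q0 fun _ => A q (tcol M Q T h2 j)]
    have : ∑ q', blk h1 A j q q' * bvec h1 h2 A j q'
        = (blk h1 A j *ᵥ bvec h1 h2 A j) q := by
      simp [Matrix.mulVec, dotProduct]
    rw [this, blk_mulVec_bvec h1 h2 A hA]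
    simp
  have hw0 : w = 0 := by
    have h9 := congrArg (fun v => N⁻¹ *ᵥ v) hNw
    simpa [Matrix.mulVec_mulVec,
      Matrix.nonsing_inv_mul N ((Matrix.isUnit_iff_isUnit_det N).mp hN),
      Matrix.one_mulVec, Matrix.mulVec_zero] using h9
  have := congrFun hw0 q0
  simp [hw] at this

lemma CRX_star :
    CRX M Q T h1 A (Xstar M Q)
      = (Matrix.blockDiagonal fun m => blk h1 A m).submatrix
          (Equiv.prodComm (Fin M) (Fin Q)) (Equiv.prodComm (Fin M) (Fin Q)) := by
  ext p p'
  rcases p with ⟨m, q⟩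
  rcases p' with ⟨m', q'⟩
  simp only [CRX, Xstar, Matrix.of_apply, Matrix.submatrix_apply, Equiv.prodComm_apply,
    Prod.swap, Matrix.blockDiagonal_apply, blk]
  by_cases hm : m' = m
  · subst hm; simp
  · simp [hm, Ne.symm hm]

lemma CRX_star_det_ne : (CRX M Q T h1 A (Xstar M Q)).det ≠ 0 := by
  rw [CRX_star h1 h2 A hA, Matrix.det_submatrix_equiv_self, Matrix.det_blockDiagonal]
  exact Finset.prod_ne_zero_iff.mpr fun m _ => blk_det_ne h1 h2 A hA m

def Bc (h1 : M * Q ≤ T) (h2 : M * (Q + 1) ≤ T) (A : Matrix (Fin Q) (Fin T) ℂ) :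
    Matrix (Fin M × Fin Q) (Fin M) ℂ :=
  Matrix.of fun p' j => if p'.1 = j then bvec h1 h2 A j p'.2 else 0

lemma CRX_mul_Bc : CRX M Q T h1 A (Xstar M Q) * Bc h1 h2 A = RtX M Q T h2 A := by
  ext p j
  rcases p with ⟨m, q⟩
  rw [Matrix.mul_apply, Fintype.sum_prod_type]
  have hinner : ∀ m' : Fin M,
      (∑ q' : Fin Q, CRX M Q T h1 A (Xstar M Q) (m, q) (m', q') * Bc h1 h2 A (m', q') j)
      = if m' = m then (if m = j then ∑ q', blk h1 A m q q' * bvec h1 h2 A j q' else 0)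
        else 0 := by
    intro m'
    by_cases hm : m' = m
    · subst hm
      by_cases hj : m' = j
      · subst hj
        simp [CRX, Xstar, Bc, blk]
      · simp [CRX, Xstar, Bc, hj]
    · simp [CRX, Xstar, Bc, hm]
  rw [Finset.sum_congr rfl fun m' _ => hinner m']
  rw [Finset.sum_ite_eq' Finset.univ m]
  simp only [Finset.mem_univ, if_true]
  by_cases hmj : m = j
  · subst hmj
    have : ∑ q', blk h1 A m q q' * bvec h1 h2 A m q'
        = (blk h1 A m *ᵥ bvec h1 h2 A m) q := by
      simp [Matrix.mulVec, dotProduct]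
    rw [if_pos rfl, this, blk_mulVec_bvec h1 h2 A hA]
    simp [RtX]
  · rw [if_neg hmj]
    simp [RtX, Ne.symm hmj]

lemma adj_mul_RtX :
    (CRX M Q T h1 A (Xstar M Q)).adjugate * RtX M Q T h2 A
      = (CRX M Q T h1 A (Xstar M Q)).det • Bc h1 h2 A := by
  rw [← CRX_mul_Bc h1 h2 A hA, ← Matrix.mul_assoc, Matrix.adjugate_mul, Matrix.smul_mul,
    Matrix.one_mul]

lemma JX_star_det_ne : (JX M Q T h1 h2 A (Xstar M Q)).det ≠ 0 := by
  set J2 : Matrix (Fin M × Fin Q) (Fin M × Fin Q) ℂ :=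
    Matrix.of fun p p' => A p.2 (emb M Q T h1 p') * Bc h1 h2 A p' p.1 with hJ2def
  have hJX : JX M Q T h1 h2 A (Xstar M Q) = (CRX M Q T h1 A (Xstar M Q)).det • J2 := by
    ext p p'
    simp only [JX, Matrix.of_apply, adj_mul_RtX h1 h2 A hA, Matrix.smul_apply, smul_eq_mul,
      hJ2def]
    ring
  have hJ2 : J2 = (Matrix.blockDiagonal
        fun m => blk h1 A m * Matrix.diagonal (bvec h1 h2 A m)).submatrix
      (Equiv.prodComm (Fin M) (Fin Q)) (Equiv.prodComm (Fin M) (Fin Q)) := by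
    ext p p'
    rcases p with ⟨m, q⟩
    rcases p' with ⟨m', q'⟩
    simp only [hJ2def, Matrix.of_apply, Bc, Matrix.submatrix_apply, Equiv.prodComm_apply,
      Prod.swap, Matrix.blockDiagonal_apply, Matrix.mul_diagonal, blk]
    by_cases hm : m' = m
    · subst hm; simp
    · simp [hm, Ne.symm hm]
  have hdJ2 : J2.det ≠ 0 := by
    rw [hJ2, Matrix.det_submatrix_equiv_self, Matrix.det_blockDiagonal]
    refine Finset.prod_ne_zero_iff.mpr fun m _ => ?_
    rw [Matrix.det_mul, Matrix.det_diagonal]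
    exact mul_ne_zero (blk_det_ne h1 h2 A hA m)
      (Finset.prod_ne_zero_iff.mpr fun q _ => bvec_ne h1 h2 A hA m q)
  rw [hJX, Matrix.det_smul]
  exact mul_ne_zero (pow_ne_zero _ (CRX_star_det_ne h1 h2 A hA)) hdJ2

lemma FX_star_ne : FX M Q T h1 h2 A (Xstar M Q) ≠ 0 :=
  mul_ne_zero (CRX_star_det_ne h1 h2 A hA) (JX_star_det_ne h1 h2 A hA)

end star
end S14

end S14outer

open MeasureTheory

/-- Theorem 2 of the paper: If every choice of `Q` columns from among
the first `M(Q+1)` columns of `A` is linearly independent (every such `Q×Q` submatrix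
is invertible), then for Lebesgue-almost every `X₀ ∈ ℂ^{M×MQ}`, letting `X` have first
`MQ` columns `X₀` and satisfy the training condition, `C_R(X)` is invertible and
`det(J(X)) ≠ 0`. -/
theorem stmt14 (M Q T : ℕ) (hM : 0 < M) (hQ : 0 < Q) (hT : 0 < T) (h : M * (Q + 1) ≤ T)
    (A : Matrix (Fin Q) (Fin T) ℂ)
    (hA : ∀ f : Fin Q → Fin (M * (Q + 1)), Function.Injective f →
      IsUnit (Matrix.of fun q q' : Fin Q => A q (Fin.castLE h (f q')))) :
    ∀ᵐ X₀ : Fin M → (Fin M × Fin Q) → ℂ ∂volume,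
      ∀ X : Matrix (Fin M) (Fin T) ℂ,
        (∀ (m : Fin M) (p' : Fin M × Fin Q),
            X m (emb M Q T (le_trans (Nat.mul_le_mul_left M (Nat.le_succ Q)) h) p') = X₀ m p') →
        (∀ n m : Fin M, X m (tcol M Q T h n) = if n = m then 1 else 0) →
        IsUnit (CR M Q T (le_trans (Nat.mul_le_mul_left M (Nat.le_succ Q)) h) A X) ∧
          (Jmat M Q T h A X).det ≠ 0 := by
    classical
  have hP : S14outer.S14.FP M Q T (le_trans (Nat.mul_le_mul_left M (Nat.le_succ Q)) h) h A ≠ 0 := by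
    intro h0
    have h5 := S14outer.S14.eval_FP (le_trans (Nat.mul_le_mul_left M (Nat.le_succ Q)) h) h A
      (fun v => S14outer.S14.Xstar M Q v.1 v.2)
    rw [h0, map_zero] at h5
    exact S14outer.S14.FX_star_ne (le_trans (Nat.mul_le_mul_left M (Nat.le_succ Q)) h) h A hA
      h5.symm
  filter_upwards [S14aux.L3 (Fin M) (Fin M × Fin Q)
    (S14outer.S14.FP M Q T (le_trans (Nat.mul_le_mul_left M (Nat.le_succ Q)) h) h A) hP]
    with X₀ hF
  intro X hX1 hX2
  rw [S14outer.S14.eval_FP] at hF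
  have hprod : (S14outer.S14.CRX M Q T (le_trans (Nat.mul_le_mul_left M (Nat.le_succ Q)) h) A X₀).det
      * (S14outer.S14.JX M Q T (le_trans (Nat.mul_le_mul_left M (Nat.le_succ Q)) h) h A X₀).det ≠ 0 := hF
  obtain ⟨hd1, hd2⟩ := mul_ne_zero_iff.mp hprod
  have hCReq : CR M Q T (le_trans (Nat.mul_le_mul_left M (Nat.le_succ Q)) h) A X
      = S14outer.S14.CRX M Q T (le_trans (Nat.mul_le_mul_left M (Nat.le_succ Q)) h) A X₀ := by
    ext p p'
    simp only [CR, S14outer.S14.CRX, Rmat, Matrix.of_apply]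
    rw [hX1 p.1 p']
  constructor
  · rw [hCReq]
    exact (Matrix.isUnit_iff_isUnit_det _).mpr (isUnit_iff_ne_zero.mpr hd1)
  · have hB : ∀ (p' : Fin M × Fin Q) (j : Fin M),
        Bmat M Q T (le_trans (Nat.mul_le_mul_left M (Nat.le_succ Q)) h) A X p' (tcol M Q T h j)
          = ((S14outer.S14.CRX M Q T (le_trans (Nat.mul_le_mul_left M (Nat.le_succ Q)) h) A X₀).det)⁻¹
              * ((S14outer.S14.CRX M Q T (le_trans (Nat.mul_le_mul_left M (Nat.le_succ Q)) h) A X₀).adjugate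
                  * S14outer.S14.RtX M Q T h A) p' j := by
      intro p' j
      have hcol : ∀ k, Rmat M Q T A X k (tcol M Q T h j) = S14outer.S14.RtX M Q T h A k j := by
        intro k
        simp only [Rmat, S14outer.S14.RtX, Matrix.of_apply, hX2 j k.1]
        split_ifs <;> simp
      simp only [Bmat, Matrix.mul_apply]
      simp only [hcol]
      rw [← Matrix.mul_apply, hCReq, Matrix.inv_def, Ring.inverse_eq_inv, Matrix.smul_mul,
        Matrix.smul_apply, smul_eq_mul, Matrix.mul_apply]
    have hJeq : Jmat M Q T h A X
        = ((S14outer.S14.CRX M Q T (le_trans (Nat.mul_le_mul_left M (Nat.le_succ Q)) h) A X₀).det)⁻¹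
            • S14outer.S14.JX M Q T (le_trans (Nat.mul_le_mul_left M (Nat.le_succ Q)) h) h A X₀ := by
      ext p p'
      simp only [Jmat, S14outer.S14.JX, Matrix.of_apply, Matrix.smul_apply, smul_eq_mul]
      rw [hB p' p.1]
      ring
    rw [hJeq, Matrix.det_smul]
    exact mul_ne_zero (pow_ne_zero _ (inv_ne_zero hd1)) hd2
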